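/- arXiv:2012.13757 — 2 statements merged into one kernel-verified Lean document; each statement's English description precedes it below -/
import Mathlib

section
/- Suppose R₀ > 1 and b ∈ (1/R₀, b*], where b* is the unique solution in (1/R₀,1] of 2·I_max(b*) = 1 - b*. Then I_max(b) ≤ (1 - b)/2 < 1/2. -/
lemma phi_mono {y x : ℝ} (hy : 0 < y) (hyx : y ≤ x) (hx : x ≤ 1) :
    y - y * Real.log y ≤ x - x * Real.log x := by
  have hmono : MonotoneOn (fun t : ℝ => t - t * Real.log t) (Set.Icc y 1) := by
    apply monotoneOn_of_deriv_nonneg (convex_Icc y 1)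
    · apply ContinuousOn.sub continuousOn_id
      exact continuousOn_id.mul (Real.continuousOn_log.mono (fun t ht => by
        have : (0:ℝ) < t := lt_of_lt_of_le hy ht.1
        exact ne_of_gt this))
    · intro t ht
      rw [interior_Icc] at ht
      have ht0 : (0:ℝ) < t := lt_trans hy ht.1
      have h1 : HasDerivAt (fun t : ℝ => t - t * Real.log t) (1 - (Real.log t + 1)) t := by
        have := (hasDerivAt_id t).mul (Real.hasDerivAt_log (ne_of_gt ht0))
        have h2 : HasDerivAt (fun t : ℝ => t * Real.log t) (Real.log t + 1) t := by
          have := ((hasDerivAt_id t).mul (Real.hasDerivAt_log (ne_of_gt ht0)))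
          exact this.congr_deriv (by simp [mul_inv_cancel₀ (ne_of_gt ht0)])
        exact (hasDerivAt_id t).sub h2
      exact (HasDerivAt.differentiableAt h1).differentiableWithinAt
    · intro t ht
      rw [interior_Icc] at ht
      have ht0 : (0:ℝ) < t := lt_trans hy ht.1
      have h2 : HasDerivAt (fun t : ℝ => t * Real.log t) (Real.log t + 1) t := by
        have := ((hasDerivAt_id t).mul (Real.hasDerivAt_log (ne_of_gt ht0)))
        exact this.congr_deriv (by simp [mul_inv_cancel₀ (ne_of_gt ht0)])
      have h1 : HasDerivAt (fun t : ℝ => t - t * Real.log t) (1 - (Real.log t + 1)) t :=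
        (hasDerivAt_id t).sub h2
      rw [h1.deriv]
      have : Real.log t < 0 := Real.log_neg ht0 ht.2
      linarith
  exact hmono ⟨le_refl y, le_trans hyx hx⟩ ⟨hyx, hx⟩ hyx

theorem Imax_le_half (R₀ : ℝ) (hR₀ : 1 < R₀)
    (Imax : ℝ → ℝ)
    (hImax : ∀ b, Imax b = 1 - 1 / (b * R₀) + 1 / (b * R₀) * Real.log (1 / (b * R₀)))
    (bstar : ℝ) (hbstar_mem : bstar ∈ Set.Ioc (1 / R₀) (1 : ℝ))
    (hbstar_eq : 2 * Imax bstar = 1 - bstar)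
    (hbstar_uniq : ∀ b ∈ Set.Ioc (1 / R₀) (1 : ℝ), 2 * Imax b = 1 - b → b = bstar)
    (b : ℝ) (hb : b ∈ Set.Ioc (1 / R₀) bstar) :
    Imax b ≤ (1 - b) / 2 ∧ (1 - b) / 2 < 1 / 2 := by
  obtain ⟨hb1, hb2⟩ := hb
  obtain ⟨hs1, hs2⟩ := hbstar_mem
  have hR0pos : (0:ℝ) < R₀ := lt_trans one_pos hR₀
  have hinvpos : (0:ℝ) < 1 / R₀ := by positivity
  have hbpos : 0 < b := lt_trans hinvpos hb1
  have hspos : 0 < bstar := lt_trans hinvpos hs1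
  have hbR : 1 < b * R₀ := by
    have := (div_lt_iff₀ hR0pos).mp hb1
    linarith
  have hsR : 1 < bstar * R₀ := by
    have := (div_lt_iff₀ hR0pos).mp hs1
    linarith
  set xb := 1 / (b * R₀) with hxb
  set xs := 1 / (bstar * R₀) with hxs
  have hxbpos : 0 < xb := by positivity
  have hxspos : 0 < xs := by positivity
  have hxb1 : xb < 1 := by
    rw [hxb, div_lt_one (by linarith)]; exact hbR
  have hxsxb : xs ≤ xb := by
    apply div_le_div_of_nonneg_left one_pos.le (by linarith)
    exact mul_le_mul_of_nonneg_right hb2 hR0pos.le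
  have key : xs - xs * Real.log xs ≤ xb - xb * Real.log xb :=
    phi_mono hxspos hxsxb hxb1.le
  have hImono : Imax b ≤ Imax bstar := by
    rw [hImax b, hImax bstar, ← hxb, ← hxs]
    linarith
  constructor
  · linarith
  · linarith
end

section
/- Define f_w(b) = 1 + b + 2·w̄ - (2/(b·R₀)) + (2/(b·R₀))·ln(1/(b·R₀)) for b ∈ (1/R₀, 1], where R₀ > 1 and 0 ≤ w̄ < (1/2)·(1 - 1/R₀). Then f_w(1/R₀) < 0, f_w(1) > 0, and f_w is strictly increasing on (1/R₀, 1]; hence there exists a unique b* ∈ (1/R₀, 1] with f_w(b*) = 0. -/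
theorem fw_exists_unique_root (R₀ w : ℝ) (hR₀ : 1 < R₀)
    (hw0 : 0 ≤ w) (hw : w < 1 / 2 * (1 - 1 / R₀))
    (fw : ℝ → ℝ)
    (hfw : ∀ b, fw b =
      1 + b + 2 * w - 2 / (b * R₀) + 2 / (b * R₀) * Real.log (1 / (b * R₀))) :
    fw (1 / R₀) < 0 ∧ 0 < fw 1 ∧ StrictMonoOn fw (Set.Ioc (1 / R₀) 1) ∧
    ∃! bstar : ℝ, bstar ∈ Set.Ioc (1 / R₀) (1 : ℝ) ∧ fw bstar = 0 := by
  have hR0 : (0:ℝ) < R₀ := lt_trans one_pos hR₀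
  have hRinv : 1 / R₀ < 1 := by
    rw [div_lt_one hR0]; exact hR₀
  have hRinvpos : (0:ℝ) < 1 / R₀ := by positivity
  -- value at 1/R₀
  have hval0 : fw (1 / R₀) < 0 := by
    have h1 : (1 / R₀) * R₀ = 1 := by field_simp
    rw [hfw, h1]
    norm_num [Real.log_inv, Real.log_one]
    have : (0:ℝ) < R₀⁻¹ := by positivity
    simp only [one_div] at hw
    linarith
  -- value at 1
  have hval1 : 0 < fw 1 := by
    have hlog : Real.log R₀ < R₀ - 1 := Real.log_lt_sub_one_of_pos hR0 (ne_of_gt hR₀)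
    rw [hfw]
    have h1 : (1:ℝ) * R₀ = R₀ := one_mul R₀
    rw [h1, Real.log_div one_ne_zero (ne_of_gt hR0), Real.log_one]
    have key : 2 / R₀ * (1 - R₀) < 2 / R₀ * (0 - Real.log R₀) :=
      mul_lt_mul_of_pos_left (by linarith) (by positivity)
    have heq : 2 / R₀ * (1 - R₀) = 2 / R₀ - 2 := by field_simp
    linarith
  -- derivative
  have hderiv : ∀ b : ℝ, 0 < b →
      HasDerivAt fw (1 - 2 * R₀ / (b * R₀)^2 * Real.log (1 / (b * R₀))) b := by
    intro b hb
    have hu : 0 < b * R₀ := mul_pos hb hR0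
    have h1 : HasDerivAt (fun x : ℝ => x * R₀) R₀ b := by
      simpa using (hasDerivAt_id b).mul_const R₀
    have h2 : HasDerivAt (fun x : ℝ => 2 / (x * R₀))
        ((0 * (b * R₀) - 2 * R₀) / (b * R₀) ^ 2) b :=
      (hasDerivAt_const b (2:ℝ)).div h1 hu.ne'
    have h3i : HasDerivAt (fun x : ℝ => 1 / (x * R₀))
        ((0 * (b * R₀) - 1 * R₀) / (b * R₀) ^ 2) b :=
      (hasDerivAt_const b (1:ℝ)).div h1 hu.ne'
    have h3 : HasDerivAt (fun x : ℝ => Real.log (1 / (x * R₀)))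
        ((0 * (b * R₀) - 1 * R₀) / (b * R₀) ^ 2 / (1 / (b * R₀))) b :=
      h3i.log (by positivity)
    have H := ((((hasDerivAt_const b (1:ℝ)).add (hasDerivAt_id b)).add
        (hasDerivAt_const b (2*w))).sub h2).add (h2.mul h3)
    have hfun : fw = fun b => 1 + b + 2 * w - 2 / (b * R₀) +
        2 / (b * R₀) * Real.log (1 / (b * R₀)) := funext hfw
    rw [hfun]
    refine H.congr_deriv ?_
    have hu2 : (b * R₀) ^ 2 ≠ 0 := by positivity
    field_simp
    ring
  -- continuity on Icc
  have hcont : ContinuousOn fw (Set.Icc (1 / R₀) 1) := by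
    intro x hx
    have hxpos : 0 < x := lt_of_lt_of_le hRinvpos hx.1
    exact ((hderiv x hxpos).continuousAt).continuousWithinAt
  -- strict mono
  have hmono : StrictMonoOn fw (Set.Ioc (1 / R₀) 1) := by
    apply strictMonoOn_of_deriv_pos (convex_Ioc _ _)
    · intro x hx
      have hxpos : 0 < x := lt_trans hRinvpos hx.1
      exact ((hderiv x hxpos).continuousAt).continuousWithinAt
    · intro x hx
      rw [interior_Ioc] at hx
      have hxpos : 0 < x := lt_trans hRinvpos hx.1
      rw [(hderiv x hxpos).deriv]
      have hu1 : 1 < x * R₀ := by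
        have := hx.1
        rw [div_lt_iff₀ hR0] at this
        linarith
      have hlogneg : Real.log (1 / (x * R₀)) < 0 := by
        apply Real.log_neg (by positivity)
        rw [div_lt_one (by linarith)]
        exact hu1
      have hpos : 0 < 2 * R₀ / (x * R₀) ^ 2 := by positivity
      nlinarith [mul_pos hpos (neg_pos.mpr hlogneg)]
  refine ⟨hval0, hval1, hmono, ?_⟩
  -- existence via IVT
  have hsub := intermediate_value_Icc (le_of_lt hRinv) hcont
  have h0mem : (0:ℝ) ∈ Set.Icc (fw (1 / R₀)) (fw 1) := ⟨le_of_lt hval0, le_of_lt hval1⟩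
  obtain ⟨c, hc, hc0⟩ := hsub h0mem
  have hcIoc : c ∈ Set.Ioc (1 / R₀) 1 := by
    refine ⟨lt_of_le_of_ne hc.1 ?_, hc.2⟩
    intro h
    rw [← h] at hc0
    rw [hc0] at hval0
    exact lt_irrefl 0 hval0
  refine ⟨c, ⟨hcIoc, hc0⟩, ?_⟩
  rintro y ⟨hy, hy0⟩
  exact hmono.injOn hy hcIoc (by rw [hy0, hc0])
end
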